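/- Example (identification of the probit separable treatment mechanism). Let Φ denote the standard normal cumulative distribution function. Let q₁, q₂, h₁, h₂ : ℝ → ℝ be differentiable functions with q₁'(z) > 0 and q₂'(z) > 0 for all z, h₁ and h₂ nonconstant with h₁(0) = h₂(0) = 0, and let s : ℝ → (0,∞). If Φ(q₁(z) + h₁(y)) = Φ(q₂(z) + h₂(y)) · s(y) for all z, y ∈ ℝ, then q₁ = q₂, h₁ = h₂, and s(y) = 1 for all y. -/

import Mathlib

open MeasureTheory Real Set


/-- The standard normal cumulative distribution function. -/
noncomputable def stdNormalCDF (x : ℝ) : ℝ :=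
  ∫ t in Set.Iic x, Real.exp (-t ^ 2 / 2) / Real.sqrt (2 * Real.pi)

noncomputable def phi (x : ℝ) : ℝ := Real.exp (-x ^ 2 / 2) / Real.sqrt (2 * Real.pi)

lemma phi_pos (x : ℝ) : 0 < phi x := by
  apply div_pos (Real.exp_pos _); positivity

lemma continuous_phi : Continuous phi := by
  unfold phi; fun_prop

lemma integrable_phi : Integrable phi := by
  have h : Integrable (fun x : ℝ => Real.exp (-(1/2) * x ^ 2)) :=
    integrable_exp_neg_mul_sq (by norm_num)
  have := h.div_const (Real.sqrt (2 * Real.pi))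
  apply this.congr
  filter_upwards with x
  unfold phi
  ring_nf

lemma hasDerivAt_Phi (x : ℝ) : HasDerivAt stdNormalCDF (phi x) x := by
  have key : ∀ t : ℝ, stdNormalCDF t = stdNormalCDF 0 + ∫ u in (0:ℝ)..t, phi u := by
    intro t
    have := intervalIntegral.integral_Iic_sub_Iic (f := phi) (μ := volume) (a := (0:ℝ)) (b := t)
      (integrable_phi.integrableOn) (integrable_phi.integrableOn)
    unfold stdNormalCDF
    simp only [phi] at this ⊢
    linarith [this]
  have h2 : HasDerivAt (fun t => stdNormalCDF 0 + ∫ u in (0:ℝ)..t, phi u) (phi x) x := by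
    apply HasDerivAt.const_add
    exact intervalIntegral.integral_hasDerivAt_right
      integrable_phi.intervalIntegrable
      (continuous_phi.stronglyMeasurableAtFilter _ _)
      continuous_phi.continuousAt
  exact (funext key : stdNormalCDF = _) ▸ h2

lemma Phi_pos (x : ℝ) : 0 < stdNormalCDF x := by
  have : 0 < ∫ t in Set.Iic x, phi t := by
    rw [setIntegral_pos_iff_support_of_nonneg_ae]
    · have : Function.support phi ∩ Set.Iic x = Set.Iic x := by
        rw [Set.inter_eq_right]
        intro t _
        exact (phi_pos t).ne'
      rw [this]
      simp
    · filter_upwards with t using (phi_pos t).le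
    · exact integrable_phi.integrableOn
  exact this

lemma hasDerivAt_phi (x : ℝ) : HasDerivAt phi (-x * phi x) x := by
  have h1 : HasDerivAt (fun t : ℝ => -t ^ 2 / 2) (-x) x := by
    have := ((hasDerivAt_pow 2 x).neg).div_const 2
    refine this.congr_deriv ?_
    ring
  have h2 := (Real.hasDerivAt_exp (-x^2/2)).comp x h1
  have h3 := h2.div_const (Real.sqrt (2 * Real.pi))
  unfold phi
  refine h3.congr_deriv ?_
  ring

/-- Identification of the probit separable treatment mechanism: if
`Φ(q₁(z) + h₁(y)) = Φ(q₂(z) + h₂(y)) · s(y)` for all `z, y`, with `q₁, q₂`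
differentiable with strictly positive derivatives, `h₁, h₂` differentiable,
nonconstant and normalized by `h₁(0) = h₂(0) = 0`, and `s` positive, then
`q₁ = q₂`, `h₁ = h₂` and `s ≡ 1`. -/
theorem example_probit_separable_identified
    (q₁ q₂ h₁ h₂ : ℝ → ℝ) (s : ℝ → ℝ)
    (hq₁ : Differentiable ℝ q₁) (hq₂ : Differentiable ℝ q₂)
    (hh₁ : Differentiable ℝ h₁) (hh₂ : Differentiable ℝ h₂)
    (hq₁' : ∀ z, 0 < deriv q₁ z) (hq₂' : ∀ z, 0 < deriv q₂ z)
    (hh₁nc : ∃ y y', h₁ y ≠ h₁ y') (hh₂nc : ∃ y y', h₂ y ≠ h₂ y')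
    (hh₁0 : h₁ 0 = 0) (hh₂0 : h₂ 0 = 0)
    (hs : ∀ y, 0 < s y)
    (heq : ∀ z y : ℝ,
        stdNormalCDF (q₁ z + h₁ y) = stdNormalCDF (q₂ z + h₂ y) * s y) :
    q₁ = q₂ ∧ h₁ = h₂ ∧ ∀ y, s y = 1 := by
  -- s is differentiable
  have hseq : ∀ y, s y = stdNormalCDF (q₁ 0 + h₁ y) / stdNormalCDF (q₂ 0 + h₂ y) := by
    intro y
    rw [heq 0 y]
    field_simp [(Phi_pos (q₂ 0 + h₂ y)).ne']
  have hΦdiff : Differentiable ℝ stdNormalCDF := fun x => (hasDerivAt_Phi x).differentiableAt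
  have hsdiff : Differentiable ℝ s := by
    rw [funext hseq]
    exact (hΦdiff.comp ((differentiable_const _).add hh₁)).div
      (hΦdiff.comp ((differentiable_const _).add hh₂))
      (fun y => (Phi_pos _).ne')
  -- R1 : differentiate heq in z
  have R1 : ∀ z y, phi (q₁ z + h₁ y) * deriv q₁ z
      = phi (q₂ z + h₂ y) * deriv q₂ z * s y := by
    intro z y
    have hL : HasDerivAt (fun z => stdNormalCDF (q₁ z + h₁ y)) (phi (q₁ z + h₁ y) * deriv q₁ z) z :=
      (hasDerivAt_Phi (q₁ z + h₁ y)).comp (h₂ := stdNormalCDF) z ((hq₁ z).hasDerivAt.add_const (h₁ y))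
    have hR : HasDerivAt (fun z => stdNormalCDF (q₂ z + h₂ y) * s y)
        (phi (q₂ z + h₂ y) * deriv q₂ z * s y) z :=
      ((hasDerivAt_Phi (q₂ z + h₂ y)).comp (h₂ := stdNormalCDF) z ((hq₂ z).hasDerivAt.add_const (h₂ y))).mul_const (s y)
    have hfun : (fun z => stdNormalCDF (q₁ z + h₁ y)) = fun z => stdNormalCDF (q₂ z + h₂ y) * s y :=
      funext fun z => heq z y
    exact (hfun ▸ hL).unique hR
  -- R3 : differentiate heq in y
  have R3 : ∀ z y, phi (q₁ z + h₁ y) * deriv h₁ y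
      = phi (q₂ z + h₂ y) * deriv h₂ y * s y + stdNormalCDF (q₂ z + h₂ y) * deriv s y := by
    intro z y
    have hL : HasDerivAt (fun y => stdNormalCDF (q₁ z + h₁ y)) (phi (q₁ z + h₁ y) * deriv h₁ y) y :=
      (hasDerivAt_Phi (q₁ z + h₁ y)).comp (h₂ := stdNormalCDF) y ((hh₁ y).hasDerivAt.const_add (q₁ z))
    have hR : HasDerivAt (fun y => stdNormalCDF (q₂ z + h₂ y) * s y)
        (phi (q₂ z + h₂ y) * deriv h₂ y * s y + stdNormalCDF (q₂ z + h₂ y) * deriv s y) y :=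
      ((hasDerivAt_Phi (q₂ z + h₂ y)).comp (h₂ := stdNormalCDF) y
        ((hh₂ y).hasDerivAt.const_add (q₂ z))).mul ((hsdiff y).hasDerivAt)
    have hfun : (fun y => stdNormalCDF (q₁ z + h₁ y)) = fun y => stdNormalCDF (q₂ z + h₂ y) * s y :=
      funext fun y => heq z y
    exact (hfun ▸ hL).unique hR
  -- R2 : differentiate R1 in y
  have R2 : ∀ z y,
      (-(q₁ z + h₁ y) * phi (q₁ z + h₁ y) * deriv h₁ y) * deriv q₁ z
      = ((-(q₂ z + h₂ y) * phi (q₂ z + h₂ y) * deriv h₂ y) * deriv q₂ z) * s y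
        + (phi (q₂ z + h₂ y) * deriv q₂ z) * deriv s y := by
    intro z y
    have hL : HasDerivAt (fun y => phi (q₁ z + h₁ y) * deriv q₁ z)
        ((-(q₁ z + h₁ y) * phi (q₁ z + h₁ y) * deriv h₁ y) * deriv q₁ z) y :=
      ((hasDerivAt_phi (q₁ z + h₁ y)).comp (h₂ := phi) y
        ((hh₁ y).hasDerivAt.const_add (q₁ z))).mul_const (deriv q₁ z)
    have hR : HasDerivAt (fun y => phi (q₂ z + h₂ y) * deriv q₂ z * s y)
        (((-(q₂ z + h₂ y) * phi (q₂ z + h₂ y) * deriv h₂ y) * deriv q₂ z) * s y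
          + (phi (q₂ z + h₂ y) * deriv q₂ z) * deriv s y) y :=
      (((hasDerivAt_phi (q₂ z + h₂ y)).comp (h₂ := phi) y
        ((hh₂ y).hasDerivAt.const_add (q₂ z))).mul_const (deriv q₂ z)).mul ((hsdiff y).hasDerivAt)
    have hfun : (fun y => phi (q₁ z + h₁ y) * deriv q₁ z)
        = fun y => phi (q₂ z + h₂ y) * deriv q₂ z * s y :=
      funext fun y => R1 z y
    exact (hfun ▸ hL).unique hR
  -- D1 : deriv s y = (v n - u m) s y
  have D1 : ∀ z y, deriv s y
      = ((q₂ z + h₂ y) * deriv h₂ y - (q₁ z + h₁ y) * deriv h₁ y) * s y := by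
    intro z y
    have e1 := R1 z y
    have e2 := R2 z y
    have hbR : phi (q₂ z + h₂ y) * deriv q₂ z ≠ 0 :=
      (mul_pos (phi_pos _) (hq₂' z)).ne'
    have key : phi (q₂ z + h₂ y) * deriv q₂ z * deriv s y
        = phi (q₂ z + h₂ y) * deriv q₂ z *
          (((q₂ z + h₂ y) * deriv h₂ y - (q₁ z + h₁ y) * deriv h₁ y) * s y) := by
      linear_combination (-1 : ℝ) * e2 - (q₁ z + h₁ y) * deriv h₁ y * e1
    exact mul_left_cancel₀ hbR key
  -- VI : r n = p m
  have VI : ∀ z y, deriv q₂ z * deriv h₂ y = deriv q₁ z * deriv h₁ y := by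
    intro z y
    have hconst : ∀ z, q₂ z * deriv h₂ y - q₁ z * deriv h₁ y
        = q₂ 0 * deriv h₂ y - q₁ 0 * deriv h₁ y := by
      intro z
      have e1 := D1 z y
      have e2 := D1 0 y
      have h3 : ((q₂ z + h₂ y) * deriv h₂ y - (q₁ z + h₁ y) * deriv h₁ y) * s y
          = ((q₂ 0 + h₂ y) * deriv h₂ y - (q₁ 0 + h₁ y) * deriv h₁ y) * s y :=
        e1.symm.trans e2
      have h4 := mul_right_cancel₀ (hs y).ne' h3
      linarith
    have hL : HasDerivAt (fun z => q₂ z * deriv h₂ y - q₁ z * deriv h₁ y)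
        (deriv q₂ z * deriv h₂ y - deriv q₁ z * deriv h₁ y) z :=
      ((hq₂ z).hasDerivAt.mul_const _).sub ((hq₁ z).hasDerivAt.mul_const _)
    have hR : HasDerivAt (fun _ : ℝ => q₂ 0 * deriv h₂ y - q₁ 0 * deriv h₁ y) 0 z :=
      hasDerivAt_const z _
    have hfun : (fun z => q₂ z * deriv h₂ y - q₁ z * deriv h₁ y)
        = fun _ => q₂ 0 * deriv h₂ y - q₁ 0 * deriv h₁ y := funext hconst
    have := (hfun ▸ hL).unique hR
    linarith
  -- a point where deriv h₁ ≠ 0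
  obtain ⟨y₀, hy₀⟩ : ∃ y₀, deriv h₁ y₀ ≠ 0 := by
    by_contra hcon
    push_neg at hcon
    obtain ⟨y, y', hne⟩ := hh₁nc
    exact hne (is_const_of_deriv_eq_zero hh₁ hcon y y')
  set κ := deriv h₂ y₀ / deriv h₁ y₀ with hκdef
  have hp : ∀ z, deriv q₁ z = κ * deriv q₂ z := by
    intro z
    have e := VI z y₀
    rw [hκdef]
    field_simp
    linear_combination -e
  have hκpos : 0 < κ := by
    have := hp 0
    have h1 := hq₁' 0
    have h2 := hq₂' 0
    nlinarith
  have hn : ∀ y, deriv h₂ y = κ * deriv h₁ y := by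
    intro y
    have e1 := VI 0 y
    have e2 := hp 0
    refine mul_left_cancel₀ (hq₂' 0).ne' ?_
    linear_combination e1 + deriv h₁ y * e2
  -- h₂ = κ h₁
  have hh2eq : ∀ y, h₂ y = κ * h₁ y := by
    intro y
    have hdiff : Differentiable ℝ (fun y => h₂ y - κ * h₁ y) :=
      hh₂.sub (hh₁.const_mul κ)
    have hzero : ∀ y, deriv (fun y => h₂ y - κ * h₁ y) y = 0 := by
      intro y
      have hd : HasDerivAt (fun y => h₂ y - κ * h₁ y) (deriv h₂ y - κ * deriv h₁ y) y :=
        (hh₂ y).hasDerivAt.sub ((hh₁ y).hasDerivAt.const_mul κ)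
      rw [hd.deriv, hn y]
      ring
    have h5 := is_const_of_deriv_eq_zero hdiff hzero y 0
    rw [hh₁0, hh₂0] at h5
    simp at h5
    linarith
  -- q₁ = κ q₂ + c
  set c := q₁ 0 - κ * q₂ 0 with hcdef
  have hq1eq : ∀ z, q₁ z = κ * q₂ z + c := by
    intro z
    have hdiff : Differentiable ℝ (fun z => q₁ z - κ * q₂ z) :=
      hq₁.sub (hq₂.const_mul κ)
    have hzero : ∀ z, deriv (fun z => q₁ z - κ * q₂ z) z = 0 := by
      intro z
      have hd : HasDerivAt (fun z => q₁ z - κ * q₂ z) (deriv q₁ z - κ * deriv q₂ z) z :=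
        (hq₁ z).hasDerivAt.sub ((hq₂ z).hasDerivAt.const_mul κ)
      rw [hd.deriv, hp z]
      ring
    have h5 := is_const_of_deriv_eq_zero hdiff hzero z 0
    rw [hcdef]
    linarith
  -- R1' : phi u * κ = phi v * s y
  have R1' : ∀ z y, phi (q₁ z + h₁ y) * κ = phi (q₂ z + h₂ y) * s y := by
    intro z y
    have e := R1 z y
    rw [hp z] at e
    refine mul_right_cancel₀ (hq₂' z).ne' ?_
    linear_combination e
  -- star identity at y₀
  have hstar : ∀ z, phi (q₁ z + h₁ y₀) * (1 - κ ^ 2)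
      = stdNormalCDF (q₁ z + h₁ y₀) * ((κ ^ 2 - 1) * h₁ y₀ - c) := by
    intro z
    have ed := D1 z y₀
    have e3 := R3 z y₀
    rw [ed] at e3
    have eA := heq z y₀
    have e1' := R1' z y₀
    rw [hn y₀] at e3
    rw [hh2eq y₀] at e3 eA e1'
    rw [hq1eq z] at e3 eA e1' ⊢
    have key : phi (κ * q₂ z + c + h₁ y₀) * (1 - κ ^ 2) * deriv h₁ y₀
        = stdNormalCDF (κ * q₂ z + c + h₁ y₀) * ((κ ^ 2 - 1) * h₁ y₀ - c) * deriv h₁ y₀ := by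
      linear_combination e3 - κ * deriv h₁ y₀ * e1'
        - ((κ ^ 2 - 1) * h₁ y₀ - c) * deriv h₁ y₀ * eA
    exact mul_right_cancel₀ hy₀ key
  by_cases hκ1 : κ = 1
  · -- c = 0
    have hc0 : c = 0 := by
      have h0 := hstar 0
      rw [hκ1] at h0
      have hpos := Phi_pos (q₁ 0 + h₁ y₀)
      have hz : stdNormalCDF (q₁ 0 + h₁ y₀) * c = 0 := by linear_combination h0
      rcases mul_eq_zero.mp hz with h | h
      · exact absurd h hpos.ne'
      · exact h
    have hq12 : q₁ = q₂ := by
      funext z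
      rw [hq1eq z, hκ1, hc0]
      ring
    have hh12 : h₁ = h₂ := by
      funext y
      rw [hh2eq y, hκ1]
      ring
    refine ⟨hq12, hh12, fun y => ?_⟩
    have h6 := heq 0 y
    rw [hq12, hh12] at h6
    have hpos := Phi_pos (q₂ 0 + h₂ y)
    have hz : stdNormalCDF (q₂ 0 + h₂ y) * (s y - 1) = 0 := by linear_combination -h6
    rcases mul_eq_zero.mp hz with h | h
    · exact absurd h hpos.ne'
    · linarith
  · -- contradiction
    exfalso
    have hκ2 : 1 - κ ^ 2 ≠ 0 := by
      intro h
      apply hκ1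
      have h' : (κ - 1) * (κ + 1) = 0 := by linear_combination -h
      rcases mul_eq_zero.mp h' with h'' | h''
      · linarith
      · linarith
    set K := ((κ ^ 2 - 1) * h₁ y₀ - c) / (1 - κ ^ 2) with hKdef
    have hlam : ∀ z, phi (q₁ z + h₁ y₀) = K * stdNormalCDF (q₁ z + h₁ y₀) := by
      intro z
      have h7 := hstar z
      rw [hKdef]
      rw [div_mul_eq_mul_div, eq_div_iff hκ2]
      linear_combination h7
    have huconst : ∀ z, q₁ z + h₁ y₀ = -K := by
      intro z
      have hL : HasDerivAt (fun z => phi (q₁ z + h₁ y₀))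
          (-(q₁ z + h₁ y₀) * phi (q₁ z + h₁ y₀) * deriv q₁ z) z :=
        (hasDerivAt_phi (q₁ z + h₁ y₀)).comp (h₂ := phi) z ((hq₁ z).hasDerivAt.add_const (h₁ y₀))
      have hR : HasDerivAt (fun z => K * stdNormalCDF (q₁ z + h₁ y₀))
          (K * (phi (q₁ z + h₁ y₀) * deriv q₁ z)) z :=
        ((hasDerivAt_Phi (q₁ z + h₁ y₀)).comp (h₂ := stdNormalCDF) z ((hq₁ z).hasDerivAt.add_const (h₁ y₀))).const_mul K
      have hfun : (fun z => phi (q₁ z + h₁ y₀)) = fun z => K * stdNormalCDF (q₁ z + h₁ y₀) :=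
        funext hlam
      have heqd := (hfun ▸ hL).unique hR
      have hne : phi (q₁ z + h₁ y₀) * deriv q₁ z ≠ 0 := (mul_pos (phi_pos _) (hq₁' z)).ne'
      have h8 : (-(q₁ z + h₁ y₀)) * (phi (q₁ z + h₁ y₀) * deriv q₁ z)
          = K * (phi (q₁ z + h₁ y₀) * deriv q₁ z) := by linear_combination heqd
      have h9 := mul_right_cancel₀ hne h8
      linarith
    have h01 : q₁ 0 < q₁ 1 := strictMono_of_deriv_pos hq₁' (by norm_num)
    have h10 := (huconst 0).trans (huconst 1).symm
    linarith
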